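/- Semantic soundness of the strengthened induction rule: for all χ, φ ∈ L_NF and γ ∈ G_NF, if the formula χ ∧ ⟨γ*⟩φ is satisfiable in some game model, then at least one of the formulas χ ∧ φ and χ ∧ ⟨γ⟩⟨(χ̄? ; γ)*⟩⟨χ̄?⟩φ is satisfiable in some game model. -/
import Mathlib


/-! Normal-form game logic: syntax -/

mutual
inductive GLForm : Type where
  | atom  : ℕ → GLForm
  | natom : ℕ → GLForm
  | or    : GLForm → GLForm → GLForm
  | and   : GLForm → GLForm → GLForm
  | dia   : GLGame → GLForm → GLForm
inductive GLGame : Type where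
  | atg   : ℕ → GLGame
  | atgd  : ℕ → GLGame
  | comp  : GLGame → GLGame → GLGame
  | cha   : GLGame → GLGame → GLGame
  | chd   : GLGame → GLGame → GLGame
  | star  : GLGame → GLGame
  | cross : GLGame → GLGame
  | test  : GLForm → GLGame
  | dtest : GLForm → GLGame
end

noncomputable instance : DecidableEq GLForm := Classical.decEq _
noncomputable instance : DecidableEq GLGame := Classical.decEq _

/-! Game models (monotone neighbourhood models via effectivity functions),
    and Knaster-Tarski least/greatest fixed points of set operators. -/

structure GameModel where
  S : Type
  E : ℕ → Set S → Set S
  mono : ∀ g, Monotone (E g)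
  V : ℕ → Set S

def lfpSet {σ : Type} (f : Set σ → Set σ) : Set σ := sInf {X | f X ⊆ X}
def gfpSet {σ : Type} (f : Set σ → Set σ) : Set σ := sSup {X | X ⊆ f X}

/-! Semantics of normal-form game logic over game models. -/

mutual
def GLForm.mng (M : GameModel) : GLForm → Set M.S
  | .atom p  => M.V p
  | .natom p => (M.V p)ᶜ
  | .or φ ψ  => GLForm.mng M φ ∪ GLForm.mng M ψ
  | .and φ ψ => GLForm.mng M φ ∩ GLForm.mng M ψ
  | .dia γ φ => GLGame.eff M γ (GLForm.mng M φ)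
def GLGame.eff (M : GameModel) : GLGame → Set M.S → Set M.S
  | .atg g,  X => M.E g X
  | .atgd g, X => (M.E g Xᶜ)ᶜ
  | .comp γ δ, X => GLGame.eff M γ (GLGame.eff M δ X)
  | .cha γ δ, X => GLGame.eff M γ X ∪ GLGame.eff M δ X
  | .chd γ δ, X => GLGame.eff M γ X ∩ GLGame.eff M δ X
  | .star γ, X => lfpSet (fun Y => X ∪ GLGame.eff M γ Y)
  | .cross γ, X => gfpSet (fun Y => X ∩ GLGame.eff M γ Y)
  | .test φ, X => GLForm.mng M φ ∩ X
  | .dtest φ, X => GLForm.mng M φ ∪ X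
end

/-- Validity over game models. -/
def GLValid (φ : GLForm) : Prop := ∀ M : GameModel, GLForm.mng M φ = Set.univ

/-! Complementation (negation normal form negation) and dual games. -/

mutual
def GLForm.compl : GLForm → GLForm
  | .atom p  => .natom p
  | .natom p => .atom p
  | .or φ ψ  => .and (GLForm.compl φ) (GLForm.compl ψ)
  | .and φ ψ => .or (GLForm.compl φ) (GLForm.compl ψ)
  | .dia γ φ => .dia (GLGame.dual γ) (GLForm.compl φ)
def GLGame.dual : GLGame → GLGame
  | .atg g  => .atgd g
  | .atgd g => .atg g
  | .comp γ δ => .comp (GLGame.dual γ) (GLGame.dual δ)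
  | .cha γ δ  => .chd (GLGame.dual γ) (GLGame.dual δ)
  | .chd γ δ  => .cha (GLGame.dual γ) (GLGame.dual δ)
  | .star γ  => .cross (GLGame.dual γ)
  | .cross γ => .star (GLGame.dual γ)
  | .test φ  => .dtest (GLForm.compl φ)
  | .dtest φ => .test (GLForm.compl φ)
end

/-- Satisfiability over game models. -/
def GLSat (φ : GLForm) : Prop := ∃ M : GameModel, (GLForm.mng M φ).Nonempty

/-! Auxiliary lemmas -/

lemma lfpSet_le {σ : Type} {f : Set σ → Set σ} {X : Set σ} (h : f X ⊆ X) :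
    lfpSet f ⊆ X := sInf_le h

lemma lfpSet_prefixed {σ : Type} {f : Set σ → Set σ} (hf : Monotone f) :
    f (lfpSet f) ⊆ lfpSet f := by
  apply le_sInf
  intro X hX
  exact (hf (lfpSet_le hX)).trans hX

lemma lfpSet_mono {σ : Type} {f g : Set σ → Set σ} (h : ∀ X, f X ⊆ g X) :
    lfpSet f ⊆ lfpSet g := by
  apply sInf_le_sInf
  intro X hX
  exact Set.Subset.trans (h X) hX

lemma gfpSet_mono {σ : Type} {f g : Set σ → Set σ} (h : ∀ X, f X ⊆ g X) :
    gfpSet f ⊆ gfpSet g := by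
  apply sSup_le_sSup
  intro X hX
  exact Set.Subset.trans hX (h X)

lemma gfpSet_eq_compl_lfpSet {σ : Type} (f : Set σ → Set σ) :
    gfpSet f = (lfpSet (fun Y => (f Yᶜ)ᶜ))ᶜ := by
  ext x
  simp only [gfpSet, lfpSet, Set.sSup_eq_sUnion, Set.sInf_eq_sInter, Set.mem_compl_iff,
    Set.mem_sUnion, Set.mem_sInter, Set.mem_setOf_eq, not_forall]
  constructor
  · rintro ⟨X, hX, hx⟩
    refine ⟨Xᶜ, ?_, by simpa using hx⟩
    rw [compl_compl]
    exact Set.compl_subset_compl.mpr hX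
  · rintro ⟨X, hX, hx⟩
    refine ⟨Xᶜ, ?_, by simpa using hx⟩
    have h2 := Set.compl_subset_compl.mpr hX
    rwa [compl_compl] at h2

lemma effMono (M : GameModel) : ∀ (γ : GLGame) {X Y : Set M.S}, X ⊆ Y → GLGame.eff M γ X ⊆ GLGame.eff M γ Y
  | .atg g, _, _, h => M.mono g h
  | .atgd g, _, _, h => by
      simp only [GLGame.eff]
      exact Set.compl_subset_compl.mpr (M.mono g (Set.compl_subset_compl.mpr h))
  | .comp γ δ, _, _, h => effMono M γ (effMono M δ h)
  | .cha γ δ, _, _, h =>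
      Set.union_subset_union (effMono M γ h) (effMono M δ h)
  | .chd γ δ, _, _, h =>
      Set.inter_subset_inter (effMono M γ h) (effMono M δ h)
  | .star γ, _, _, h => by
      simp only [GLGame.eff]
      exact lfpSet_mono (fun Z => Set.union_subset_union h (le_refl _))
  | .cross γ, _, _, h => by
      simp only [GLGame.eff]
      exact gfpSet_mono (fun Z => Set.inter_subset_inter h (le_refl _))
  | .test ψ, _, _, h => Set.inter_subset_inter subset_rfl h
  | .dtest ψ, _, _, h => Set.union_subset_union subset_rfl h

mutual
theorem mng_compl (M : GameModel) :
    ∀ χ : GLForm, GLForm.mng M (GLForm.compl χ) = (GLForm.mng M χ)ᶜ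
  | .atom p => rfl
  | .natom p => by simp [GLForm.compl, GLForm.mng]
  | .or φ ψ => by
      simp [GLForm.compl, GLForm.mng, mng_compl M φ, mng_compl M ψ, Set.compl_union]
  | .and φ ψ => by
      simp [GLForm.compl, GLForm.mng, mng_compl M φ, mng_compl M ψ, Set.compl_inter]
  | .dia γ φ => by
      simp [GLForm.compl, GLForm.mng, mng_compl M φ, eff_dual M γ]
theorem eff_dual (M : GameModel) :
    ∀ (γ : GLGame) (X : Set M.S),
      GLGame.eff M (GLGame.dual γ) X = (GLGame.eff M γ Xᶜ)ᶜ
  | .atg g, X => rfl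
  | .atgd g, X => by simp [GLGame.dual, GLGame.eff]
  | .comp γ δ, X => by
      simp [GLGame.dual, GLGame.eff, eff_dual M δ X, eff_dual M γ]
  | .cha γ δ, X => by
      simp [GLGame.dual, GLGame.eff, eff_dual M γ X, eff_dual M δ X, Set.compl_union]
  | .chd γ δ, X => by
      simp [GLGame.dual, GLGame.eff, eff_dual M γ X, eff_dual M δ X, Set.compl_inter]
  | .star γ, X => by
      simp only [GLGame.dual, GLGame.eff]
      rw [gfpSet_eq_compl_lfpSet]
      congr 1
      apply congrArg
      funext Y
      rw [eff_dual M γ Yᶜ]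
      simp [Set.compl_inter]
  | .cross γ, X => by
      simp only [GLGame.dual, GLGame.eff]
      rw [gfpSet_eq_compl_lfpSet, compl_compl]
      apply congrArg
      funext Y
      rw [eff_dual M γ]
      simp [Set.compl_inter]
  | .test φ, X => by
      simp [GLGame.dual, GLGame.eff, mng_compl M φ, Set.compl_inter]
  | .dtest φ, X => by
      simp [GLGame.dual, GLGame.eff, mng_compl M φ, Set.compl_union]
end

/-- Semantic soundness of the strengthened induction rule: if
    `χ ∧ ⟨γ*⟩φ` is satisfiable, then so is `χ ∧ φ` or
    `χ ∧ ⟨γ⟩⟨(χ̄? ; γ)*⟩⟨χ̄?⟩φ`. -/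
theorem strengthened_induction_semantically_sound (χ φ : GLForm) (γ : GLGame) :
    GLSat (.and χ (.dia (.star γ) φ)) →
    GLSat (.and χ φ) ∨
      GLSat (.and χ (.dia γ (.dia (.star (.comp (.test (GLForm.compl χ)) γ))
        (.dia (.test (GLForm.compl χ)) φ)))) := by
  intro ⟨M, x, hx⟩
  by_contra hcon
  push_neg at hcon
  obtain ⟨h1, h2⟩ := hcon
  rw [GLSat] at h1 h2
  push_neg at h1 h2
  have h1' := h1 M
  have h2' := h2 M
  set A := GLForm.mng M χ with hA
  set F := GLForm.mng M φ with hF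
  simp only [GLForm.mng, GLGame.eff, mng_compl M χ] at h1' h2' hx
  -- T : the meaning of ⟨(χ̄?;γ)*⟩⟨χ̄?⟩φ
  set T := lfpSet (fun Y => Aᶜ ∩ F ∪ Aᶜ ∩ GLGame.eff M γ Y) with hT
  have hmono : Monotone (fun Y => Aᶜ ∩ F ∪ Aᶜ ∩ GLGame.eff M γ Y) := by
    intro X Y h
    show Aᶜ ∩ F ∪ Aᶜ ∩ GLGame.eff M γ X ⊆ Aᶜ ∩ F ∪ Aᶜ ∩ GLGame.eff M γ Y
    exact Set.union_subset_union subset_rfl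
      (Set.inter_subset_inter subset_rfl (effMono M γ h))
  have hTpre : Aᶜ ∩ F ∪ Aᶜ ∩ GLGame.eff M γ T ⊆ T := by
    rw [hT]
    exact lfpSet_prefixed hmono
  have hFA : F ⊆ Aᶜ := by
    intro y hy
    intro hyA
    have : y ∈ A ∩ F := ⟨hyA, hy⟩
    rw [h1'] at this; exact this
  have hGA : GLGame.eff M γ T ⊆ Aᶜ := by
    intro y hy
    intro hyA
    have : y ∈ A ∩ GLGame.eff M γ T := ⟨hyA, hy⟩
    rw [h2'] at this; exact this
  have hZT : Aᶜ ∩ (F ∪ GLGame.eff M γ T) ⊆ T := by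
    refine Set.Subset.trans ?_ hTpre
    rw [Set.inter_union_distrib_left]
  have hmain : lfpSet (fun Y => F ∪ GLGame.eff M γ Y) ⊆ Aᶜ ∩ (F ∪ GLGame.eff M γ T) := by
    apply lfpSet_le
    apply Set.union_subset
    · exact Set.subset_inter hFA Set.subset_union_left
    · have h3 : GLGame.eff M γ (Aᶜ ∩ (F ∪ GLGame.eff M γ T)) ⊆ GLGame.eff M γ T :=
        effMono M γ hZT
      exact Set.subset_inter (h3.trans hGA) (h3.trans Set.subset_union_right)
  exact (hmain hx.2).1 hx.1
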